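/- Let a, b be coprime positive integers with a ≠ b and let X > 0 be real. Then the two-dimensional Lebesgue measures satisfy vol(R′(X)) = vol(R(X)) = X·vol(S_{b/a}) / √|a² − b²|. -/

import Mathlib

open scoped Classical

/-- `p_u(s,t)`. -/
noncomputable def pForm (u s t : ℝ) : ℝ :=
  -2 * s ^ 2 - ((1 - u ^ 2) / |1 - u ^ 2|) * t ^ 2 +
    (4 / Real.sqrt |1 - u ^ 2|) * s * t

/-- `q_u(s,t)`. -/
noncomputable def qForm (u s t : ℝ) : ℝ :=
  2 * s ^ 2 - ((1 - u ^ 2) / |1 - u ^ 2|) * t ^ 2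

/-- `r_u(s,t)`. -/
noncomputable def rForm (u s t : ℝ) : ℝ :=
  2 * s ^ 2 - (2 * (1 - u ^ 2) / Real.sqrt |1 - u ^ 2|) * s * t +
    ((1 - u ^ 2) / |1 - u ^ 2|) * t ^ 2

/-- The region `S_u`. -/
noncomputable def Sregion (u : ℝ) : Set (ℝ × ℝ) :=
  {p | 0 < p.2 ∧ 0 < pForm u p.1 p.2 ∧ pForm u p.1 p.2 ≤ 1 ∧
    0 < qForm u p.1 p.2 ∧ qForm u p.1 p.2 ≤ 1 ∧ 0 < rForm u p.1 p.2}

/-- `Q₁(s,t)` with real arguments. -/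
noncomputable def Q1r (a b : ℤ) (s t : ℝ) : ℝ :=
  2 * s ^ 2 + ((a : ℝ) ^ 2 - (b : ℝ) ^ 2) * t ^ 2 - 4 * (a : ℝ) * s * t

/-- `Q₂(s,t)` with real arguments. -/
noncomputable def Q2r (a b : ℤ) (s t : ℝ) : ℝ :=
  -2 * s ^ 2 + ((a : ℝ) ^ 2 - (b : ℝ) ^ 2) * t ^ 2

/-- `Q₃(s,t)` with real arguments. -/
noncomputable def Q3r (a b : ℤ) (s t : ℝ) : ℝ :=
  -2 * (a : ℝ) * s ^ 2 + 2 * ((a : ℝ) ^ 2 - (b : ℝ) ^ 2) * s * t -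
    (a : ℝ) * ((a : ℝ) ^ 2 - (b : ℝ) ^ 2) * t ^ 2

/-- The region `R(X)`. -/
noncomputable def Rregion (a b : ℤ) (X : ℝ) : Set (ℝ × ℝ) :=
  {p | 0 < p.2 ∧ Q3r a b p.1 p.2 < 0 ∧
    -X ≤ Q1r a b p.1 p.2 ∧ Q1r a b p.1 p.2 < 0 ∧
    -X ≤ Q2r a b p.1 p.2 ∧ Q2r a b p.1 p.2 < 0}

/-- The region `R′(X)`. -/
noncomputable def Rregion' (a b : ℤ) (X : ℝ) : Set (ℝ × ℝ) :=
  {p ∈ Rregion a b X | p.1 * (p.1 - (a : ℝ) * p.2) ≠ 0 ∧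
    2 * (a : ℝ) * p.1 ≠ ((a : ℝ) ^ 2 - (b : ℝ) ^ 2) * p.2}

open MeasureTheory

/-- A line `{p | p.1 = m * p.2}` in the plane has measure zero. -/
lemma volume_line_zero (m : ℝ) : volume {p : ℝ × ℝ | p.1 = m * p.2} = 0 := by
  have hsub : {p : ℝ × ℝ | p.1 = m * p.2} ⊆
      (Submodule.span ℝ {((m : ℝ), (1 : ℝ))} : Submodule ℝ (ℝ × ℝ)) := by
    intro p hp
    rw [SetLike.mem_coe, Submodule.mem_span_singleton]
    exact ⟨p.2, by have := hp.out; simp [Prod.ext_iff, this.symm, mul_comm]⟩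
  have hne : (Submodule.span ℝ {((m : ℝ), (1 : ℝ))} : Submodule ℝ (ℝ × ℝ)) ≠ ⊤ := by
    intro h
    have : ((1 : ℝ), (0 : ℝ)) ∈ Submodule.span ℝ {((m : ℝ), (1 : ℝ))} := by
      rw [h]; trivial
    rw [Submodule.mem_span_singleton] at this
    obtain ⟨t, ht⟩ := this
    rw [Prod.ext_iff] at ht
    simp at ht
    rcases ht with ⟨h1, h2⟩
    rw [h2] at h1; simp at h1
  exact measure_mono_null hsub (Measure.addHaar_submodule volume _ hne)

lemma det_diag (c c' : ℝ) :
    LinearMap.det (Matrix.toLin (Module.Basis.finTwoProd ℝ) (Module.Basis.finTwoProd ℝ) !![c, 0; 0, c']) = c * c' := by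
  rw [LinearMap.det_toLin, Matrix.det_fin_two_of]
  ring

lemma iff_helper {X aX cw t P Q R : ℝ} (hX : 0 < X) (haX : 0 < aX) (hcw : 0 < cw) :
    (0 < cw * t ∧ -aX * R < 0 ∧ -X ≤ -X * P ∧ -X * P < 0 ∧ -X ≤ -X * Q ∧ -X * Q < 0) ↔
    (0 < t ∧ 0 < P ∧ P ≤ 1 ∧ 0 < Q ∧ Q ≤ 1 ∧ 0 < R) := by
  constructor
  · rintro ⟨h1, h2, h3, h4, h5, h6⟩
    refine ⟨?_, ?_, ?_, ?_, ?_, ?_⟩ <;> nlinarith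
  · rintro ⟨h1, h2, h3, h4, h5, h6⟩
    refine ⟨?_, ?_, ?_, ?_, ?_, ?_⟩ <;> nlinarith

theorem volume_Rregion (a b : ℤ) (ha : 0 < a) (hb : 0 < b)
    (hab : Int.gcd a b = 1) (hne : a ≠ b) (X : ℝ) (hX : 0 < X) :
    MeasureTheory.volume (Rregion' a b X) = MeasureTheory.volume (Rregion a b X) ∧
      MeasureTheory.volume (Rregion a b X) =
        ENNReal.ofReal (X / Real.sqrt |(a : ℝ) ^ 2 - (b : ℝ) ^ 2|) *
          MeasureTheory.volume (Sregion ((b : ℝ) / (a : ℝ))) := by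
  have haR : (0 : ℝ) < (a : ℝ) := by exact_mod_cast ha
  have hbR : (0 : ℝ) < (b : ℝ) := by exact_mod_cast hb
  have ha0 : (a : ℝ) ≠ 0 := ne_of_gt haR
  set D : ℝ := (a : ℝ) ^ 2 - (b : ℝ) ^ 2 with hDdef
  have hD : D ≠ 0 := by
    intro h
    apply hne
    have hab2 : (a : ℝ) = (b : ℝ) := by nlinarith [hDdef]
    exact_mod_cast hab2
  have hDabs : (0 : ℝ) < |D| := abs_pos.2 hD
  set w : ℝ := Real.sqrt |D| with hwdef
  have hw : 0 < w := Real.sqrt_pos.2 hDabs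
  have hw0 : w ≠ 0 := ne_of_gt hw
  have hw2 : w ^ 2 = |D| := Real.sq_sqrt (abs_nonneg D)
  set c : ℝ := Real.sqrt X with hcdef
  have hc : 0 < c := Real.sqrt_pos.2 hX
  have hc0 : c ≠ 0 := ne_of_gt hc
  have hc2 : c ^ 2 = X := Real.sq_sqrt hX.le
  have hcw : 0 < c / w := div_pos hc hw
  have hcw0 : c / w ≠ 0 := ne_of_gt hcw
  set u : ℝ := (b : ℝ) / (a : ℝ) with hudef
  -- coefficient identities
  have h1u : 1 - u ^ 2 = D / (a : ℝ) ^ 2 := by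
    rw [hudef, hDdef]; field_simp
  have habs : |1 - u ^ 2| = w ^ 2 / (a : ℝ) ^ 2 := by
    rw [h1u, abs_div, abs_of_pos (pow_pos haR 2), hw2]
  have hu3 : Real.sqrt |1 - u ^ 2| = w / (a : ℝ) := by
    rw [habs, Real.sqrt_div (sq_nonneg w), Real.sqrt_sq hw.le, Real.sqrt_sq haR.le]
  have hA : (1 - u ^ 2) / |1 - u ^ 2| = D / w ^ 2 := by
    rw [habs, h1u]
    field_simp
  have hB : 4 / Real.sqrt |1 - u ^ 2| = 4 * (a : ℝ) / w := by
    rw [hu3]; field_simp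
  have hC : 2 * (1 - u ^ 2) / Real.sqrt |1 - u ^ 2| = 2 * D / ((a : ℝ) * w) := by
    rw [hu3, h1u]; field_simp
  -- key form identities
  have key1 : ∀ s t : ℝ, Q1r a b (c * s) (c / w * t) = -X * pForm u s t := by
    intro s t
    rw [Q1r, pForm, hA, hB, ← hDdef, ← hc2]
    field_simp
    ring
  have key2 : ∀ s t : ℝ, Q2r a b (c * s) (c / w * t) = -X * qForm u s t := by
    intro s t
    rw [Q2r, qForm, hA, ← hDdef, ← hc2]
    field_simp
    ring
  have key3 : ∀ s t : ℝ, Q3r a b (c * s) (c / w * t) = -((a : ℝ) * X) * rForm u s t := by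
    intro s t
    rw [Q3r, rForm, hA, hC, ← hDdef, ← hc2]
    field_simp
    ring
  have haX : (0 : ℝ) < (a : ℝ) * X := mul_pos haR hX
  -- the membership equivalence
  have hiff : ∀ s t : ℝ, ((c * s, c / w * t) ∈ Rregion a b X) ↔ ((s, t) ∈ Sregion u) := by
    intro s t
    simp only [Rregion, Sregion, Set.mem_setOf_eq]
    rw [key1 s t, key2 s t, key3 s t]
    exact iff_helper hX haX hcw
  -- the set equality
  have hset : Rregion a b X =
      (fun p : ℝ × ℝ => (c * p.1, c / w * p.2)) '' Sregion u := by
    ext p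
    constructor
    · intro hp
      have e1 : c * (p.1 / c) = p.1 := by field_simp
      have e2 : c / w * (p.2 / (c / w)) = p.2 := by field_simp
      have hpair : ((c * (p.1 / c), c / w * (p.2 / (c / w))) : ℝ × ℝ) = p := by
        rw [Prod.ext_iff]; exact ⟨e1, e2⟩
      refine ⟨(p.1 / c, p.2 / (c / w)), (hiff _ _).1 ?_, hpair⟩
      rw [hpair]; exact hp
    · rintro ⟨q, hq, rfl⟩
      exact (hiff q.1 q.2).2 hq
  -- the linear map
  set f : (ℝ × ℝ) →ₗ[ℝ] (ℝ × ℝ) :=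
    Matrix.toLin (Module.Basis.finTwoProd ℝ) (Module.Basis.finTwoProd ℝ) !![c, 0; 0, c / w] with hfdef
  have hfapp : ∀ p : ℝ × ℝ, f p = (c * p.1, c / w * p.2) := by
    intro p
    rw [hfdef, Matrix.toLin_finTwoProd_apply]
    simp
  have hfun : (fun p : ℝ × ℝ => (c * p.1, c / w * p.2)) = ⇑f := by
    funext p; exact (hfapp p).symm
  have himg : Rregion a b X = f '' Sregion u := by
    rw [hset, hfun]
  have hdet : LinearMap.det f = c * (c / w) := det_diag c (c / w)
  have hvol : volume (Rregion a b X) =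
      ENNReal.ofReal (X / w) * volume (Sregion u) := by
    rw [himg, Measure.addHaar_image_linearMap, hdet]
    congr 1
    rw [abs_of_pos (mul_pos hc hcw)]
    rw [mul_div_assoc']
    congr 1
    rw [← hc2]; ring
  constructor
  · -- R' has the same volume as R
    have hsub' : Rregion' a b X ⊆ Rregion a b X := fun p hp => hp.1
    set L : Set (ℝ × ℝ) := {p : ℝ × ℝ | p.1 = 0 * p.2} ∪ {p : ℝ × ℝ | p.1 = (a : ℝ) * p.2} ∪
      {p : ℝ × ℝ | p.1 = D / (2 * (a : ℝ)) * p.2} with hLdef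
    have hL : volume L = 0 := by
      rw [hLdef]
      refine measure_union_null (measure_union_null ?_ ?_) ?_ <;> apply volume_line_zero
    have hcover : Rregion a b X ⊆ Rregion' a b X ∪ L := by
      intro p hp
      by_cases h1 : p.1 * (p.1 - (a : ℝ) * p.2) ≠ 0 ∧
          2 * (a : ℝ) * p.1 ≠ ((a : ℝ) ^ 2 - (b : ℝ) ^ 2) * p.2
      · exact Or.inl ⟨hp, h1⟩
      · right
        rw [hLdef]
        rcases not_and_or.1 h1 with h | h
        · push_neg at h
          rcases mul_eq_zero.1 h with h' | h'
          · exact Or.inl (Or.inl (by simp [Set.mem_setOf_eq, h']))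
          · exact Or.inl (Or.inr (by simpa [Set.mem_setOf_eq, sub_eq_zero] using h'))
        · push_neg at h
          right
          show p.1 = D / (2 * (a : ℝ)) * p.2
          rw [hDdef]
          field_simp
          linarith [h]
    refine le_antisymm (measure_mono hsub') ?_
    calc volume (Rregion a b X) ≤ volume (Rregion' a b X ∪ L) := measure_mono hcover
      _ ≤ volume (Rregion' a b X) + volume L := measure_union_le _ _
      _ = volume (Rregion' a b X) := by rw [hL, add_zero]
  · exact hvol
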